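/- arXiv:2109.14996 — 3 statements merged into one kernel-verified Lean document; each statement's English description precedes it below -/
import Mathlib

section
/- Let X ∈ V and Y ∈ W be independent integrable random vectors in Euclidean spaces. Then for every u ∈ V ⊗ W, the support function of K(X ⊗ Y) satisfies h_{K(X⊗Y)}(u) = E_Y[h_{K(X)}(T_Y(u))], where T_y = id_V ⊗ ⟨·, y⟩ : V ⊗ W → V. Consequently K(X ⊗ Y) depends only on K(X) and K(Y). -/
open MeasureTheory ProbabilityTheory

noncomputable def suppFn {Ω : Type*} [MeasurableSpace Ω] (μ : Measure Ω)
    {V : Type*} [NormedAddCommGroup V] [InnerProductSpace ℝ V]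
    (X : Ω → V) (v : V) : ℝ :=
  (1 / 2) * ∫ ω, |(inner ℝ v (X ω) : ℝ)| ∂μ

/-- The tensor product `V ⊗ W ≅ ℝ^{m×n}` realized concretely: `(x ⊗ y)_{ij} = x_i y_j`. -/
noncomputable def tensorE {m n : ℕ} (x : EuclideanSpace ℝ (Fin m)) (y : EuclideanSpace ℝ (Fin n)) :
    EuclideanSpace ℝ (Fin m × Fin n) :=
  (WithLp.equiv 2 (Fin m × Fin n → ℝ)).symm fun p => x p.1 * y p.2

/-- The contraction `T_y = id ⊗ ⟨·, y⟩ : V ⊗ W → V`. -/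
noncomputable def contractE {m n : ℕ} (y : EuclideanSpace ℝ (Fin n))
    (u : EuclideanSpace ℝ (Fin m × Fin n)) : EuclideanSpace ℝ (Fin m) :=
  (WithLp.equiv 2 (Fin m → ℝ)).symm fun i => ∑ j, u (i, j) * y j

/-- The contraction on the other factor. -/
noncomputable def contractE' {m n : ℕ} (x : EuclideanSpace ℝ (Fin m))
    (u : EuclideanSpace ℝ (Fin m × Fin n)) : EuclideanSpace ℝ (Fin n) :=
  (WithLp.equiv 2 (Fin n → ℝ)).symm fun j => ∑ i, u (i, j) * x i

section Aux

variable {m n : ℕ}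

lemma inner_tensorE_left (u : EuclideanSpace ℝ (Fin m × Fin n)) (x : EuclideanSpace ℝ (Fin m))
    (y : EuclideanSpace ℝ (Fin n)) :
    (inner ℝ u (tensorE x y) : ℝ) = inner ℝ (contractE y u) x := by
  simp only [tensorE, contractE, PiLp.inner_apply, RCLike.inner_apply, conj_trivial,
    WithLp.equiv_symm_apply, PiLp.toLp_apply, Fintype.sum_prod_type, Finset.sum_mul]
  congr 1; ext i; rw [Finset.mul_sum]; congr 1; ext j; ring

lemma inner_tensorE_right (u : EuclideanSpace ℝ (Fin m × Fin n)) (x : EuclideanSpace ℝ (Fin m))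
    (y : EuclideanSpace ℝ (Fin n)) :
    (inner ℝ u (tensorE x y) : ℝ) = inner ℝ (contractE' x u) y := by
  simp only [tensorE, contractE', PiLp.inner_apply, RCLike.inner_apply, conj_trivial,
    WithLp.equiv_symm_apply, PiLp.toLp_apply, Fintype.sum_prod_type, Finset.sum_mul]
  rw [Finset.sum_comm]
  congr 1; ext j; rw [Finset.mul_sum]; congr 1; ext i; ring

lemma norm_tensorE_le (x : EuclideanSpace ℝ (Fin m)) (y : EuclideanSpace ℝ (Fin n)) :
    ‖tensorE x y‖ ≤ ‖x‖ * ‖y‖ := by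
  have h : ‖tensorE x y‖ = ‖x‖ * ‖y‖ := by
    rw [EuclideanSpace.norm_eq, EuclideanSpace.norm_eq, EuclideanSpace.norm_eq,
      ← Real.sqrt_mul (by positivity)]
    congr 1
    simp only [tensorE, WithLp.equiv_symm_apply, PiLp.toLp_apply, Fintype.sum_prod_type]
    simp only [norm_mul, mul_pow, Finset.sum_mul, Finset.mul_sum, Real.norm_eq_abs, sq_abs]
    exact Finset.sum_comm ..
  exact h.le

lemma continuous_tensorE :
    Continuous fun p : EuclideanSpace ℝ (Fin m) × EuclideanSpace ℝ (Fin n) =>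
      tensorE p.1 p.2 := by
  unfold tensorE
  refine (PiLp.continuous_toLp 2 fun _ : Fin m × Fin n => ℝ).comp
    (continuous_pi fun q => ?_)
  exact (((EuclideanSpace.proj q.1).continuous.comp continuous_fst).mul
    ((EuclideanSpace.proj q.2).continuous.comp continuous_snd))

lemma continuous_gE (u : EuclideanSpace ℝ (Fin m × Fin n)) :
    Continuous fun p : EuclideanSpace ℝ (Fin m) × EuclideanSpace ℝ (Fin n) =>
      |(inner ℝ u (tensorE p.1 p.2) : ℝ)| :=
  continuous_abs.comp (continuous_const.inner continuous_tensorE)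

lemma abs_inner_tensorE_le (u : EuclideanSpace ℝ (Fin m × Fin n))
    (x : EuclideanSpace ℝ (Fin m)) (y : EuclideanSpace ℝ (Fin n)) :
    |(inner ℝ u (tensorE x y) : ℝ)| ≤ ‖u‖ * (‖x‖ * ‖y‖) :=
  le_trans (abs_real_inner_le_norm _ _)
    (mul_le_mul_of_nonneg_left (norm_tensorE_le x y) (norm_nonneg u))

/-- Key formula: `h_{K(X⊗Y)}(u) = E_Y[h_{K(X)}(T_Y u)]` for independent `X`, `Y`. -/
lemma key1 {Ω : Type*} [MeasurableSpace Ω] (μ : Measure Ω) [IsProbabilityMeasure μ]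
    (X : Ω → EuclideanSpace ℝ (Fin m)) (Y : Ω → EuclideanSpace ℝ (Fin n))
    (hX : Integrable X μ) (hY : Integrable Y μ)
    (hXm : Measurable X) (hYm : Measurable Y)
    (hindep : IndepFun X Y μ) (u : EuclideanSpace ℝ (Fin m × Fin n)) :
    suppFn μ (fun ω => tensorE (X ω) (Y ω)) u = ∫ ω, suppFn μ X (contractE (Y ω) u) ∂μ := by
  set g : EuclideanSpace ℝ (Fin m) × EuclideanSpace ℝ (Fin n) → ℝ :=
    fun p => |(inner ℝ u (tensorE p.1 p.2) : ℝ)| with hgdef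
  have hgc : Continuous g := continuous_gE u
  have hmap : μ.map (fun ω => (X ω, Y ω)) = (μ.map X).prod (μ.map Y) :=
    (indepFun_iff_map_prod_eq_prod_map_map hXm.aemeasurable hYm.aemeasurable).1 hindep
  have hnX : Integrable (fun x : EuclideanSpace ℝ (Fin m) => ‖x‖) (μ.map X) := by
    rw [integrable_map_measure continuous_norm.aestronglyMeasurable hXm.aemeasurable]
    exact hX.norm
  have hnY : Integrable (fun y : EuclideanSpace ℝ (Fin n) => ‖y‖) (μ.map Y) := by
    rw [integrable_map_measure continuous_norm.aestronglyMeasurable hYm.aemeasurable]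
    exact hY.norm
  have hgint : Integrable g ((μ.map X).prod (μ.map Y)) := by
    refine Integrable.mono ((hnX.mul_prod hnY).const_mul ‖u‖) hgc.aestronglyMeasurable
      (ae_of_all _ fun p => ?_)
    rw [Real.norm_eq_abs, abs_abs, Real.norm_eq_abs]
    exact le_trans (abs_inner_tensorE_le u p.1 p.2) (le_abs_self _)
  have hG : StronglyMeasurable fun y => ∫ x, g (x, y) ∂(μ.map X) :=
    hgc.stronglyMeasurable.integral_prod_left'
  have main : ∫ ω, g (X ω, Y ω) ∂μ = ∫ ω, ∫ ω', g (X ω', Y ω) ∂μ ∂μ := by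
    calc ∫ ω, g (X ω, Y ω) ∂μ
        = ∫ p, g p ∂(μ.map (fun ω => (X ω, Y ω))) :=
          (integral_map (hXm.prodMk hYm).aemeasurable hgc.aestronglyMeasurable).symm
      _ = ∫ p, g p ∂((μ.map X).prod (μ.map Y)) := by rw [hmap]
      _ = ∫ y, ∫ x, g (x, y) ∂(μ.map X) ∂(μ.map Y) := integral_prod_symm g hgint
      _ = ∫ ω, ∫ x, g (x, Y ω) ∂(μ.map X) ∂μ :=
          integral_map hYm.aemeasurable hG.aestronglyMeasurable
      _ = ∫ ω, ∫ ω', g (X ω', Y ω) ∂μ ∂μ := by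
          refine integral_congr_ae (ae_of_all _ fun ω => ?_)
          exact integral_map hXm.aemeasurable
            (hgc.comp (continuous_id.prodMk continuous_const)).aestronglyMeasurable
  simp only [suppFn, ← inner_tensorE_left, integral_const_mul]
  rw [main]

/-- Fubini swap for the double integral. -/
lemma keySwap {Ω : Type*} [MeasurableSpace Ω] (μ : Measure Ω) [IsProbabilityMeasure μ]
    (A : Ω → EuclideanSpace ℝ (Fin m)) (B : Ω → EuclideanSpace ℝ (Fin n))
    (hA : Integrable A μ) (hB : Integrable B μ)
    (hAm : Measurable A) (hBm : Measurable B) (u : EuclideanSpace ℝ (Fin m × Fin n)) :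
    ∫ ω, ∫ ω', |(inner ℝ u (tensorE (A ω') (B ω)) : ℝ)| ∂μ ∂μ
      = ∫ ω', ∫ ω, |(inner ℝ u (tensorE (A ω') (B ω)) : ℝ)| ∂μ ∂μ := by
  apply integral_integral_swap
  have hmeas : Measurable fun z : Ω × Ω => (A z.2, B z.1) :=
    (hAm.comp measurable_snd).prodMk (hBm.comp measurable_fst)
  refine Integrable.mono ((hB.norm.mul_prod hA.norm).const_mul ‖u‖)
    (((continuous_gE u).stronglyMeasurable.comp_measurable hmeas).aestronglyMeasurable)
    (ae_of_all _ fun z => ?_)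
  rw [Real.norm_eq_abs, Real.norm_eq_abs, Function.uncurry]
  simp only [abs_abs]
  refine le_trans (abs_inner_tensorE_le u (A z.2) (B z.1)) (le_trans (le_of_eq ?_) (le_abs_self _))
  ring

end Aux

/-- For independent integrable `X ∈ V`, `Y ∈ W`:
`h_{K(X⊗Y)}(u) = E_Y[h_{K(X)}(T_Y(u))]`; consequently `K(X ⊗ Y)` depends only on
`K(X)` and `K(Y)` (i.e. only on their support functions). -/
theorem stmt8 {Ω : Type*} [MeasurableSpace Ω] (μ : Measure Ω) [IsProbabilityMeasure μ]
    {m n : ℕ} (X : Ω → EuclideanSpace ℝ (Fin m)) (Y : Ω → EuclideanSpace ℝ (Fin n))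
    (hX : Integrable X μ) (hY : Integrable Y μ)
    (hXm : Measurable X) (hYm : Measurable Y)
    (hindep : IndepFun X Y μ) :
    (∀ u : EuclideanSpace ℝ (Fin m × Fin n),
        suppFn μ (fun ω => tensorE (X ω) (Y ω)) u
          = ∫ ω, suppFn μ X (contractE (Y ω) u) ∂μ) ∧
    (∀ (X' : Ω → EuclideanSpace ℝ (Fin m)) (Y' : Ω → EuclideanSpace ℝ (Fin n)),
        Integrable X' μ → Integrable Y' μ → Measurable X' → Measurable Y' →
        IndepFun X' Y' μ →
        (∀ v, suppFn μ X' v = suppFn μ X v) → (∀ w, suppFn μ Y' w = suppFn μ Y w) →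
        ∀ u, suppFn μ (fun ω => tensorE (X' ω) (Y' ω)) u
              = suppFn μ (fun ω => tensorE (X ω) (Y ω)) u) := by
  refine ⟨key1 μ X Y hX hY hXm hYm hindep, ?_⟩
  intro X' Y' hX' hY' hX'm hY'm hindep' hXeq hYeq u
  calc suppFn μ (fun ω => tensorE (X' ω) (Y' ω)) u
      = ∫ ω, suppFn μ X' (contractE (Y' ω) u) ∂μ :=
        key1 μ X' Y' hX' hY' hX'm hY'm hindep' u
    _ = ∫ ω, suppFn μ X (contractE (Y' ω) u) ∂μ := by simp only [hXeq]
    _ = (1 / 2) * ∫ ω, ∫ ω', |(inner ℝ u (tensorE (X ω') (Y' ω)) : ℝ)| ∂μ ∂μ := by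
        simp only [suppFn, ← inner_tensorE_left, integral_const_mul]
    _ = (1 / 2) * ∫ ω', ∫ ω, |(inner ℝ u (tensorE (X ω') (Y' ω)) : ℝ)| ∂μ ∂μ := by
        rw [keySwap μ X Y' hX hY' hXm hY'm u]
    _ = ∫ ω', suppFn μ Y' (contractE' (X ω') u) ∂μ := by
        simp only [suppFn, ← inner_tensorE_right, integral_const_mul]
    _ = ∫ ω', suppFn μ Y (contractE' (X ω') u) ∂μ := by simp only [hYeq]
    _ = (1 / 2) * ∫ ω', ∫ ω, |(inner ℝ u (tensorE (X ω') (Y ω)) : ℝ)| ∂μ ∂μ := by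
        simp only [suppFn, ← inner_tensorE_right, integral_const_mul]
    _ = (1 / 2) * ∫ ω, ∫ ω', |(inner ℝ u (tensorE (X ω') (Y ω)) : ℝ)| ∂μ ∂μ := by
        rw [keySwap μ X Y hX hY hXm hYm u]
    _ = ∫ ω, suppFn μ X (contractE (Y ω) u) ∂μ := by
        simp only [suppFn, ← inner_tensorE_left, integral_const_mul]
    _ = suppFn μ (fun ω => tensorE (X ω) (Y ω)) u :=
        (key1 μ X Y hX hY hXm hYm hindep u).symm
end

section
/- For zonoids K in V and L in W with m = dim V ≤ dim W, one has ‖K ⊗ L‖ ≤ 2√m · ‖K‖ · ‖L‖, where ‖K‖ = max_{x∈K}‖x‖. -/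
open MeasureTheory ProbabilityTheory

/-- The radius (norm) `‖K‖ = max_{x ∈ K} ‖x‖ = sup_{‖u‖=1} h_K(u)` of a zonoid `K = K(X)`. -/
noncomputable def zonoidRadius {Ω : Type*} [MeasurableSpace Ω] (μ : Measure Ω)
    {V : Type*} [NormedAddCommGroup V] [InnerProductSpace ℝ V]
    (X : Ω → V) : ℝ :=
  sSup (suppFn μ X '' Metric.sphere (0 : V) 1)

section aux
variable {Ω : Type*} [MeasurableSpace Ω] {μ : Measure Ω}
  {V : Type*} [NormedAddCommGroup V] [InnerProductSpace ℝ V] {X : Ω → V}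

lemma suppFn_nonneg (v : V) : 0 ≤ suppFn μ X v :=
  mul_nonneg (by norm_num) (integral_nonneg fun ω => abs_nonneg _)

lemma zonoidRadius_nonneg : 0 ≤ zonoidRadius μ X :=
  Real.sSup_nonneg (by rintro x ⟨v, -, rfl⟩; exact suppFn_nonneg v)

lemma euclidean_coord_le_norm {k : ℕ} (x : EuclideanSpace ℝ (Fin k)) (i : Fin k) :
    |x i| ≤ ‖x‖ := by
  rw [EuclideanSpace.norm_eq, ← Real.sqrt_sq_eq_abs]
  refine Real.sqrt_le_sqrt ?_
  have := Finset.single_le_sum (f := fun j => ‖x j‖ ^ 2)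
    (fun j _ => sq_nonneg _) (Finset.mem_univ i)
  simpa [Real.norm_eq_abs, sq_abs] using this

lemma suppFn_bddAbove (hX : Integrable X μ) :
    BddAbove (suppFn μ X '' Metric.sphere (0 : V) 1) := by
  refine ⟨(1 / 2) * ∫ ω, ‖X ω‖ ∂μ, ?_⟩
  rintro x ⟨v, hv, rfl⟩
  simp only [Metric.mem_sphere, dist_zero_right] at hv
  refine mul_le_mul_of_nonneg_left ?_ (by norm_num)
  refine integral_mono_of_nonneg (Filter.Eventually.of_forall fun ω => abs_nonneg _)
    hX.norm (Filter.Eventually.of_forall fun ω => ?_)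
  calc |(inner ℝ v (X ω) : ℝ)| ≤ ‖v‖ * ‖X ω‖ := abs_real_inner_le_norm _ _
  _ = ‖X ω‖ := by rw [hv, one_mul]

lemma integral_abs_inner_le (hX : Integrable X μ) (v : V) :
    ∫ ω, |(inner ℝ v (X ω) : ℝ)| ∂μ ≤ 2 * ‖v‖ * zonoidRadius μ X := by
  rcases eq_or_ne v 0 with rfl | hv
  · simp [zonoidRadius_nonneg (μ := μ) (X := X)]
  · have hvn : ‖v‖ ≠ 0 := norm_ne_zero_iff.mpr hv
    have hmem : (‖v‖⁻¹ • v) ∈ Metric.sphere (0 : V) 1 := by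
      simp [norm_smul, abs_of_nonneg (norm_nonneg v), inv_mul_cancel₀ hvn]
    have h1 : suppFn μ X (‖v‖⁻¹ • v) ≤ zonoidRadius μ X :=
      le_csSup (suppFn_bddAbove hX) ⟨_, hmem, rfl⟩
    have h2 : suppFn μ X v = ‖v‖ * suppFn μ X (‖v‖⁻¹ • v) := by
      unfold suppFn
      have hptw : ∀ ω, |(inner ℝ v (X ω) : ℝ)| = ‖v‖ * |(inner ℝ (‖v‖⁻¹ • v) (X ω) : ℝ)| := by
        intro ω
        rw [real_inner_smul_left, abs_mul, abs_inv, abs_norm, ← mul_assoc,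
          mul_inv_cancel₀ hvn, one_mul]
      simp only [hptw, integral_const_mul]
      ring
    have : suppFn μ X v ≤ ‖v‖ * zonoidRadius μ X := by
      rw [h2]
      exact mul_le_mul_of_nonneg_left h1 (norm_nonneg v)
    unfold suppFn at this
    linarith

end aux

/-- For zonoids `K ⊆ ℝᵐ`, `L ⊆ ℝⁿ` with `m ≤ n`: `‖K ⊗ L‖ ≤ 2√m ‖K‖ ‖L‖`. -/
theorem stmt10 {Ω : Type*} [MeasurableSpace Ω] (μ : Measure Ω) [IsProbabilityMeasure μ]
    {m n : ℕ} (hmn : m ≤ n)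
    (X : Ω → EuclideanSpace ℝ (Fin m)) (Y : Ω → EuclideanSpace ℝ (Fin n))
    (hX : Integrable X μ) (hY : Integrable Y μ)
    (hXm : Measurable X) (hYm : Measurable Y)
    (hindep : IndepFun X Y μ) :
    zonoidRadius μ (fun ω => tensorE (X ω) (Y ω))
      ≤ 2 * Real.sqrt m * zonoidRadius μ X * zonoidRadius μ Y := by
  set RX := zonoidRadius μ X with hRX
  set RY := zonoidRadius μ Y with hRY
  have hRX0 : 0 ≤ RX := zonoidRadius_nonneg
  have hRY0 : 0 ≤ RY := zonoidRadius_nonneg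
  have hrhs : 0 ≤ 2 * Real.sqrt m * RX * RY := by positivity
  refine Real.sSup_le ?_ hrhs
  rintro x ⟨u, hu, rfl⟩
  simp only [Metric.mem_sphere, dist_zero_right] at hu
  -- row i of u as a vector in ℝⁿ
  set r : Fin m → EuclideanSpace ℝ (Fin n) := fun i => (WithLp.equiv 2 _).symm fun j => u (i, j) with hr
  -- pointwise: |⟨u, x ⊗ y⟩| ≤ ∑ i, |x i| * |⟨r i, y⟩|
  have hpt : ∀ (x : EuclideanSpace ℝ (Fin m)) (y : EuclideanSpace ℝ (Fin n)),
      |(inner ℝ u (tensorE x y) : ℝ)| ≤ ∑ i, |x i| * |(inner ℝ (r i) y : ℝ)| := by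
    intro x y
    have : (inner ℝ u (tensorE x y) : ℝ) = ∑ i, x i * (inner ℝ (r i) y : ℝ) := by
      simp only [PiLp.inner_apply, RCLike.inner_apply, conj_trivial, tensorE, hr,
        WithLp.equiv_symm_apply, PiLp.toLp_apply, Finset.mul_sum]
      rw [← Finset.sum_product']
      refine Finset.sum_congr rfl fun p _ => by ring
    rw [this]
    refine (Finset.abs_sum_le_sum_abs _ _).trans ?_
    exact le_of_eq (Finset.sum_congr rfl fun i _ => abs_mul _ _)
  -- integrability and independence of the factors
  have hXi : ∀ i : Fin m, Integrable (fun ω => |X ω i|) μ := by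
    intro i
    refine Integrable.mono' hX.norm ?_ (Filter.Eventually.of_forall fun ω => ?_)
    · exact ((PiLp.proj (𝕜 := ℝ) 2 (fun _ : Fin m => ℝ) i).continuous.measurable.comp hXm).abs.aestronglyMeasurable
    · simpa using euclidean_coord_le_norm (X ω) i
  have hYi : ∀ i : Fin m, Integrable (fun ω => |(inner ℝ (r i) (Y ω) : ℝ)|) μ := by
    intro i
    refine Integrable.mono' (hY.norm.const_mul ‖r i‖) ?_ (Filter.Eventually.of_forall fun ω => ?_)
    · exact (((innerSL ℝ (r i)).continuous.measurable).comp hYm).abs.aestronglyMeasurable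
    · simpa using abs_real_inner_le_norm (r i) (Y ω)
  have hind : ∀ i : Fin m, IndepFun (fun ω => |X ω i|) (fun ω => |(inner ℝ (r i) (Y ω) : ℝ)|) μ := by
    intro i
    exact hindep.comp ((PiLp.proj (𝕜 := ℝ) 2 (fun _ : Fin m => ℝ) i).continuous.measurable).abs ((innerSL ℝ (r i)).continuous.measurable).abs
  have hprod : ∀ i : Fin m, Integrable (fun ω => |X ω i| * |(inner ℝ (r i) (Y ω) : ℝ)|) μ :=
    fun i => (hind i).integrable_mul (hXi i) (hYi i)
  -- main integral bound
  have hmain : ∫ ω, |(inner ℝ u (tensorE (X ω) (Y ω)) : ℝ)| ∂μ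
      ≤ ∑ i, (∫ ω, |X ω i| ∂μ) * (∫ ω, |(inner ℝ (r i) (Y ω) : ℝ)| ∂μ) := by
    calc ∫ ω, |(inner ℝ u (tensorE (X ω) (Y ω)) : ℝ)| ∂μ
        ≤ ∫ ω, ∑ i, |X ω i| * |(inner ℝ (r i) (Y ω) : ℝ)| ∂μ := by
          refine integral_mono_of_nonneg (Filter.Eventually.of_forall fun ω => abs_nonneg _)
            (integrable_finset_sum _ fun i _ => hprod i)
            (Filter.Eventually.of_forall fun ω => hpt _ _)
      _ = ∑ i, ∫ ω, |X ω i| * |(inner ℝ (r i) (Y ω) : ℝ)| ∂μ :=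
          integral_finset_sum _ fun i _ => hprod i
      _ = ∑ i, (∫ ω, |X ω i| ∂μ) * (∫ ω, |(inner ℝ (r i) (Y ω) : ℝ)| ∂μ) :=
          Finset.sum_congr rfl fun i _ => (hind i).integral_fun_mul_eq_mul_integral (hXi i).aestronglyMeasurable (hYi i).aestronglyMeasurable
  -- bound each factor
  have hXb : ∀ i : Fin m, ∫ ω, |X ω i| ∂μ ≤ 2 * RX := by
    intro i
    have := integral_abs_inner_le hX (EuclideanSpace.single i (1 : ℝ))
    simp only [EuclideanSpace.norm_single, norm_one, mul_one] at this
    refine le_trans (le_of_eq ?_) this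
    refine integral_congr_ae (Filter.Eventually.of_forall fun ω => ?_)
    congr 1
    simp [PiLp.inner_apply, RCLike.inner_apply, EuclideanSpace.single_apply]
  have hYb : ∀ i : Fin m, ∫ ω, |(inner ℝ (r i) (Y ω) : ℝ)| ∂μ ≤ 2 * ‖r i‖ * RY :=
    fun i => integral_abs_inner_le hY (r i)
  -- Cauchy–Schwarz on row norms
  have hCS : ∑ i, ‖r i‖ ≤ Real.sqrt m := by
    have h1 : ∑ i : Fin m, ‖r i‖ * 1 ≤
        Real.sqrt (∑ i : Fin m, ‖r i‖ ^ 2) * Real.sqrt (∑ i : Fin m, (1:ℝ) ^ 2) :=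
      Real.sum_mul_le_sqrt_mul_sqrt _ _ _
    have h2 : ∑ i : Fin m, ‖r i‖ ^ 2 = 1 := by
      have : ∑ i : Fin m, ‖r i‖ ^ 2 = ‖u‖ ^ 2 := by
        rw [EuclideanSpace.norm_eq u, Real.sq_sqrt (by positivity), Fintype.sum_prod_type]
        refine Finset.sum_congr rfl fun i _ => ?_
        rw [EuclideanSpace.norm_eq, Real.sq_sqrt (by positivity)]
        simp [hr, WithLp.equiv_symm_apply, PiLp.toLp_apply]
      rw [this, hu, one_pow]
    simp only [mul_one, one_pow, Finset.sum_const, Finset.card_univ, Fintype.card_fin,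
      nsmul_eq_mul] at h1
    rw [h2, Real.sqrt_one, one_mul] at h1
    simpa using h1
  -- combine
  have hfinal : ∑ i, (∫ ω, |X ω i| ∂μ) * (∫ ω, |(inner ℝ (r i) (Y ω) : ℝ)| ∂μ)
      ≤ 4 * RX * RY * Real.sqrt m := by
    calc ∑ i, (∫ ω, |X ω i| ∂μ) * (∫ ω, |(inner ℝ (r i) (Y ω) : ℝ)| ∂μ)
        ≤ ∑ i : Fin m, (2 * RX) * (2 * ‖r i‖ * RY) := by
          refine Finset.sum_le_sum fun i _ => ?_
          refine mul_le_mul (hXb i) (hYb i) (integral_nonneg fun ω => abs_nonneg _) (by positivity)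
      _ = 4 * RX * RY * ∑ i, ‖r i‖ := by
          simp only [Finset.mul_sum]
          exact Finset.sum_congr rfl fun i _ => by ring
      _ ≤ 4 * RX * RY * Real.sqrt m := by
          exact mul_le_mul_of_nonneg_left hCS (by positivity)
  unfold suppFn
  calc (1/2 : ℝ) * ∫ ω, |(inner ℝ u (tensorE (X ω) (Y ω)) : ℝ)| ∂μ
      ≤ (1/2 : ℝ) * (4 * RX * RY * Real.sqrt m) := by
        refine mul_le_mul_of_nonneg_left (hmain.trans hfinal) (by norm_num)
    _ = 2 * Real.sqrt m * RX * RY := by ring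
end

section
/- Let z₁, …, z_n ∈ ℂ^n be ℝ-linearly independent with real span E ⊂ ℂ^n ≅ ℝ^{2n}, and write z_j = x_j + i y_j with x_j, y_j ∈ ℝ^n. Then |z₁ ∧_ℂ ⋯ ∧_ℂ z_n| = ‖(x₁,y₁) ∧ ⋯ ∧ (x_n,y_n)‖ · σ^J(E)^{1/2}, where σ^J(E) = |e₁∧⋯∧e_n∧Je₁∧⋯∧Je_n| for any orthonormal basis e₁,…,e_n of E. -/
open Matrix

-- key determinant lemma
theorem blockdet {n : ℕ} (W : Matrix (Fin n) (Fin n) ℂ) :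
    (Matrix.fromBlocks (W.map Complex.re) (-(W.map Complex.im))
      (W.map Complex.im) (W.map Complex.re)).det
      = Complex.normSq W.det := by
  set X : Matrix (Fin n) (Fin n) ℂ := (W.map Complex.re).map (Complex.ofReal)
  set Y : Matrix (Fin n) (Fin n) ℂ := (W.map Complex.im).map (Complex.ofReal)
  have hW : W = X + Complex.I • Y := by
    ext r j
    simp [X, Y, Matrix.map_apply, Complex.ext_iff]
  have hL : (Matrix.fromBlocks (1 : Matrix (Fin n) (Fin n) ℂ) (Complex.I • 1) (0 : Matrix (Fin n) (Fin n) ℂ) 1).det = 1 := by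
    rw [Matrix.det_fromBlocks_zero₂₁]; simp
  have hR : (Matrix.fromBlocks (1 : Matrix (Fin n) (Fin n) ℂ) (-(Complex.I) • 1) (0 : Matrix (Fin n) (Fin n) ℂ) 1).det = 1 := by
    rw [Matrix.det_fromBlocks_zero₂₁]; simp
  have hprod : (Matrix.fromBlocks (1 : Matrix (Fin n) (Fin n) ℂ) (Complex.I • 1) (0 : Matrix (Fin n) (Fin n) ℂ) 1)
      * (Matrix.fromBlocks X (-Y) Y X)
      * (Matrix.fromBlocks 1 (-(Complex.I) • 1) (0 : Matrix (Fin n) (Fin n) ℂ) 1)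
      = Matrix.fromBlocks W 0 Y (X - Complex.I • Y) := by
    rw [Matrix.fromBlocks_multiply, Matrix.fromBlocks_multiply]
    refine Matrix.ext fun r j => ?_
    rcases r with r | r <;> rcases j with j | j <;>
      simp [Matrix.fromBlocks, Matrix.smul_mul, Matrix.mul_smul, smul_smul,
        Complex.I_mul_I, hW, Matrix.add_apply, Matrix.smul_apply, Matrix.sub_apply,
        Matrix.neg_apply] <;> ring_nf
  have h1 : ((Matrix.fromBlocks (W.map Complex.re) (-(W.map Complex.im))
      (W.map Complex.im) (W.map Complex.re)).det : ℂ)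
      = (Matrix.fromBlocks X (-Y) Y X).det := by
    rw [show (((Matrix.fromBlocks (W.map Complex.re) (-(W.map Complex.im))
        (W.map Complex.im) (W.map Complex.re)).det : ℝ) : ℂ)
      = Complex.ofRealHom (Matrix.fromBlocks (W.map Complex.re) (-(W.map Complex.im))
        (W.map Complex.im) (W.map Complex.re)).det from rfl, RingHom.map_det]
    congr 1
    ext r j
    rcases r with r | r <;> rcases j with j | j <;> simp [X, Y, Matrix.fromBlocks]
  have h2 : (Matrix.fromBlocks X (-Y) Y X).det = W.det * (X - Complex.I • Y).det := by
    have h := congrArg Matrix.det hprod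
    rw [Matrix.det_mul, Matrix.det_mul, hL, hR, Matrix.det_fromBlocks_zero₁₂] at h
    simpa using h
  have h3 : X - Complex.I • Y = W.map (starRingEnd ℂ) := by
    ext r j
    simp [X, Y, Complex.ext_iff]
  have h4 : (W.map (starRingEnd ℂ)).det = (starRingEnd ℂ) W.det :=
    ((starRingEnd ℂ).map_det W).symm
  have h5 := h1.trans (h2.trans (by rw [h3, h4, Complex.mul_conj]))
  exact_mod_cast h5


open MeasureTheory

/-- Let `z₁,…,z_n ∈ ℂⁿ` be `ℝ`-linearly independent with real span `E ⊆ ℂⁿ ≅ ℝ²ⁿ`.  Then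
`|z₁ ∧_ℂ ⋯ ∧_ℂ z_n| = ‖(x₁,y₁) ∧ ⋯ ∧ (x_n,y_n)‖ · σ^J(E)^{1/2}`, where `z_j = x_j + i y_j`.
Concretely: the complex wedge modulus is `|det_ℂ(z₁,…,z_n)|`; the real wedge norm is the
square root of the Gram determinant, the Gram entries being
`⟨(x_a,y_a),(x_b,y_b)⟩_{ℝ²ⁿ} = Re⟨z_a, z_b⟩`; and
`σ^J(E) = |e₁∧⋯∧e_n∧Je₁∧⋯∧Je_n|` is expressed, for any real-orthonormal basis `e` of `E`
(`J` = multiplication by `i`), as the absolute determinant of the real `2n×2n` matrix whose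
columns are the realifications of `e₁,…,e_n, Je₁,…,Je_n`. -/
theorem stmt19 {n : ℕ} (z : Fin n → EuclideanSpace ℂ (Fin n))
    (hz : LinearIndependent ℝ z)
    (e : Fin n → EuclideanSpace ℂ (Fin n))
    (he : ∀ i j, ((inner ℂ (e i) (e j) : ℂ)).re = if i = j then 1 else 0)
    (hspan : Submodule.span ℝ (Set.range e) = Submodule.span ℝ (Set.range z)) :
    ‖(Matrix.of fun r j => z j r).det‖
      = Real.sqrt ((Matrix.of fun a b : Fin n => ((inner ℂ (z a) (z b) : ℂ)).re).det) *
        Real.sqrt |(Matrix.of fun (r c : Fin n ⊕ Fin n) =>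
            match r, c with
            | Sum.inl r, Sum.inl j => (e j r).re
            | Sum.inr r, Sum.inl j => (e j r).im
            | Sum.inl r, Sum.inr j => -(e j r).im
            | Sum.inr r, Sum.inr j => (e j r).re).det| := by
  classical
  have hmem : ∀ j, z j ∈ Submodule.span ℝ (Set.range e) := by
    intro j
    rw [hspan]
    exact Submodule.subset_span ⟨j, rfl⟩
  choose c hc using fun j => (Submodule.mem_span_range_iff_exists_fun ℝ).mp (hmem j)
  set A : Matrix (Fin n) (Fin n) ℝ := Matrix.of fun k j => c j k with hA
  set W : Matrix (Fin n) (Fin n) ℂ := Matrix.of fun r j => e j r with hWdef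
  -- factorization of the z matrix
  have hzf : (Matrix.of fun r j => z j r) = W * A.map Complex.ofRealHom := by
    ext r j
    have := congrArg (fun v : EuclideanSpace ℂ (Fin n) => v r) (hc j)
    simp only [Matrix.mul_apply, Matrix.of_apply, Matrix.map_apply]
    rw [← this]
    rw [show (∑ x : Fin n, c j x • e x) r = ∑ x : Fin n, (c j x • e x) r from by
      rw [WithLp.ofLp_sum, Finset.sum_apply]]
    refine Finset.sum_congr rfl fun x _ => ?_
    show c j x • (e x r) = e x r * ((c j x : ℝ) : ℂ)
    rw [Complex.real_smul, mul_comm]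
  -- Gram matrix factorization
  have hgram : (Matrix.of fun a b : Fin n => ((inner ℂ (z a) (z b) : ℂ)).re) = Aᵀ * A := by
    ext a b
    rw [Matrix.of_apply, ← hc a, ← hc b]
    have hsmul : ∀ (r : ℝ) (x : EuclideanSpace ℂ (Fin n)), r • x = (r : ℂ) • x :=
      fun r x => RCLike.real_smul_eq_coe_smul (K := ℂ) r x
    simp only [hsmul, sum_inner, inner_sum, inner_smul_left, inner_smul_right,
      Complex.conj_ofReal, Complex.re_sum, ← mul_assoc, ← Complex.ofReal_mul,
      Complex.re_ofReal_mul, he, mul_ite, mul_one, mul_zero]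
    simp [Matrix.mul_apply, Matrix.transpose_apply, A, Finset.sum_ite_eq, mul_comm]
  -- the J-matrix
  have hJ : (Matrix.of fun (r c : Fin n ⊕ Fin n) =>
            match r, c with
            | Sum.inl r, Sum.inl j => (e j r).re
            | Sum.inr r, Sum.inl j => (e j r).im
            | Sum.inl r, Sum.inr j => -(e j r).im
            | Sum.inr r, Sum.inr j => (e j r).re)
      = Matrix.fromBlocks (W.map Complex.re) (-(W.map Complex.im))
          (W.map Complex.im) (W.map Complex.re) := by
    ext r j
    rcases r with r | r <;> rcases j with j | j <;> rfl
  rw [hzf, hgram, hJ, blockdet, Matrix.det_mul, norm_mul, Matrix.det_mul,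
    Matrix.det_transpose]
  rw [show (A.map Complex.ofRealHom).det = Complex.ofRealHom A.det
      from (Complex.ofRealHom.map_det A).symm]
  rw [show ‖Complex.ofRealHom A.det‖ = |A.det| from (Complex.norm_real _).trans (Real.norm_eq_abs _),
    ← sq, Real.sqrt_sq_eq_abs]
  rw [show |Complex.normSq W.det| = Complex.normSq W.det from
      abs_of_nonneg (Complex.normSq_nonneg _)]
  rw [show Real.sqrt (Complex.normSq W.det) = ‖W.det‖ from
      (Complex.norm_def W.det).symm]
  ring
end
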